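/- Fix β ∈ (0,1) and define s(i) := (i+1)·exp((log(i+1))^β) for i ∈ ℕ₀. Then ∑_{i=n}^∞ 1/s(i) < ∞ for every n, and lim_{n→∞} (∑_{i=n}^∞ 1/s(i)) · β·(log n)^{β−1}·exp((log n)^β) = 1; that is, ∑_{i=n}^∞ 1/s(i) = (β^{−1}+o(1))·(log n)^{1−β}·exp(−(log n)^β) as n → ∞. -/

import Mathlib

open Filter Real Set

noncomputable def ff (β : ℝ) : ℝ → ℝ := fun x => 1 / (x * Real.exp (Real.log x ^ β))
noncomputable def gg (β : ℝ) : ℝ → ℝ := fun x => β⁻¹ * Real.log x ^ (1-β) * Real.exp (-(Real.log x ^ β))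

lemma gg_deriv (β : ℝ) (hβ0 : 0 < β) {x : ℝ} (he : Real.exp 1 < x) :
    HasDerivAt (gg β) (-(ff β x) * (1 - (1-β)/β * Real.log x ^ (-β))) x := by
  have hx0 : 0 < x := lt_trans (Real.exp_pos 1) he
  have hL : 1 < Real.log x := (Real.lt_log_iff_exp_lt hx0).2 he
  have hL0 : 0 < Real.log x := by linarith
  have hlog : HasDerivAt Real.log x⁻¹ x := Real.hasDerivAt_log hx0.ne'
  have h1 : HasDerivAt (fun y => Real.log y ^ (1-β)) (x⁻¹ * (1-β) * Real.log x ^ (1-β-1)) x :=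
    hlog.rpow_const (Or.inl hL0.ne')
  have h2 : HasDerivAt (fun y => -(Real.log y ^ β)) (-(x⁻¹ * β * Real.log x ^ (β-1))) x :=
    (hlog.rpow_const (Or.inl hL0.ne')).neg
  have h3 : HasDerivAt (fun y => Real.exp (-(Real.log y ^ β)))
      (Real.exp (-(Real.log x ^ β)) * -(x⁻¹ * β * Real.log x ^ (β-1))) x := h2.exp
  have h4 := (h1.mul h3).const_mul β⁻¹
  have hgg : gg β = fun y => β⁻¹ * (Real.log y ^ (1-β) * Real.exp (-(Real.log y ^ β))) := by
    funext y; simp [gg, mul_assoc]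
  rw [hgg]
  refine h4.congr_deriv (Eq.symm ?_)
  have hE : Real.exp (-(Real.log x ^ β)) = (Real.exp (Real.log x ^ β))⁻¹ := Real.exp_neg _
  have hmul : Real.log x ^ (1-β) * Real.log x ^ (β-1) = 1 := by
    rw [← Real.rpow_add hL0]; norm_num
  have hmb : Real.log x ^ (1-β-1) = Real.log x ^ (-β) := by norm_num
  have hnb : Real.log x ^ (-β) = (Real.log x ^ β)⁻¹ := by
    rw [← Real.rpow_neg hL0.le]
  simp only [ff, hE, hmb, hnb]
  have hexp : Real.exp (Real.log x ^ β) ≠ 0 := Real.exp_ne_zero _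
  have hLb : Real.log x ^ β ≠ 0 := (Real.rpow_pos_of_pos hL0 β).ne'
  field_simp
  ring_nf
  have hmul2 : Real.log x ^ (1-β) * Real.log x ^ (-1+β) = 1 := by
    rw [← Real.rpow_add hL0]; norm_num
  linear_combination
    (Real.log x ^ β * β) * hmul2

lemma ff_nonneg (β : ℝ) {x : ℝ} (hx : 0 ≤ x) : 0 ≤ ff β x := by
  have := (Real.exp_pos (Real.log x ^ β)).le
  simp only [ff]; positivity

lemma ff_anti (β : ℝ) (hβ0 : 0 < β) {x y : ℝ} (hx : 1 ≤ x) (hxy : x ≤ y) :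
    ff β y ≤ ff β x := by
  have hx0 : 0 < x := by linarith
  simp only [ff]
  apply one_div_le_one_div_of_le
  · positivity
  · have hlog : Real.log x ≤ Real.log y := Real.log_le_log hx0 hxy
    have hlx : 0 ≤ Real.log x := Real.log_nonneg hx
    exact mul_le_mul hxy (Real.exp_le_exp.2 (Real.rpow_le_rpow hlx hlog hβ0.le))
      (Real.exp_pos _).le (by linarith)

lemma gg_tendsto (β : ℝ) (hβ0 : 0 < β) : Tendsto (gg β) atTop (nhds 0) := by
  have h1 : Tendsto (fun t : ℝ => β⁻¹ * (t ^ ((1-β)/β) * Real.exp (-(1*t)))) atTop (nhds 0) := by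
    have := tendsto_rpow_mul_exp_neg_mul_atTop_nhds_zero ((1-β)/β) 1 one_pos
    have h2 := this.const_mul β⁻¹
    simpa [neg_mul] using h2
  have hcomp : Tendsto (fun x : ℝ => Real.log x ^ β) atTop atTop :=
    (tendsto_rpow_atTop hβ0).comp Real.tendsto_log_atTop
  have h3 := h1.comp hcomp
  apply h3.congr'
  filter_upwards [Filter.eventually_ge_atTop (1:ℝ)] with x hx
  have hL : 0 ≤ Real.log x := Real.log_nonneg hx
  simp only [Function.comp, gg, one_mul]
  rw [← Real.rpow_mul hL, mul_comm β ((1-β)/β), div_mul_cancel₀ _ hβ0.ne', mul_assoc]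

lemma one_lt_e : (1:ℝ) < Real.exp 1 := by
  have := Real.exp_one_gt_d9; linarith

lemma lemA (β : ℝ) (hβ0 : 0 < β) (hβ1 : β < 1) {a : ℝ} (ha : Real.exp 1 < a) :
    gg β a - gg β (a+1) ≤ ff β a := by
  have h1a : (1:ℝ) ≤ a := le_of_lt (lt_trans one_lt_e ha)
  have hmem : ∀ x ∈ Icc a (a+1), Real.exp 1 < x := fun x hx => lt_of_lt_of_le ha hx.1
  have hmono : MonotoneOn (fun x => ff β a * x + gg β x) (Icc a (a+1)) := by
    apply monotoneOn_of_hasDerivWithinAt_nonneg (convex_Icc _ _)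
      (f' := fun x => ff β a * 1 + -(ff β x) * (1 - (1-β)/β * Real.log x ^ (-β)))
    · intro x hx
      exact (((hasDerivAt_id x).const_mul (ff β a)).add
        (gg_deriv β hβ0 (hmem x hx))).continuousAt.continuousWithinAt
    · intro x hx
      rw [interior_Icc] at hx
      exact (((hasDerivAt_id x).const_mul (ff β a)).add
        (gg_deriv β hβ0 (hmem x (Ioo_subset_Icc_self hx)))).hasDerivWithinAt
    · intro x hx
      rw [interior_Icc] at hx
      have hx' := hmem x (Ioo_subset_Icc_self hx)
      have hx1 : (1:ℝ) ≤ x := le_of_lt (lt_trans one_lt_e hx')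
      have hL : 0 ≤ Real.log x := Real.log_nonneg hx1
      have key : ff β x * (1 - (1-β)/β * Real.log x ^ (-β)) ≤ ff β a := by
        calc ff β x * (1 - (1-β)/β * Real.log x ^ (-β)) ≤ ff β x := by
              apply mul_le_of_le_one_right (ff_nonneg β (by linarith))
              have : 0 ≤ (1-β)/β * Real.log x ^ (-β) :=
                mul_nonneg (div_nonneg (by linarith) hβ0.le) (Real.rpow_nonneg hL _)
              linarith
          _ ≤ ff β a := ff_anti β hβ0 h1a hx.1.le
      nlinarith [key]
  have := hmono (left_mem_Icc.2 (by linarith)) (right_mem_Icc.2 (by linarith)) (by linarith : a ≤ a+1)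
  simp only at this
  linarith

lemma lemB (β : ℝ) (hβ0 : 0 < β) (hβ1 : β < 1) {a : ℝ} (ha : Real.exp 1 < a)
    (hc1 : (1-β)/β * Real.log a ^ (-β) ≤ 1) :
    (1 - (1-β)/β * Real.log a ^ (-β)) * ff β (a+1) ≤ gg β a - gg β (a+1) := by
  have h1a : (1:ℝ) ≤ a := le_of_lt (lt_trans one_lt_e ha)
  have ha0 : 0 < a := by linarith
  have hLa : 0 < Real.log a := Real.log_pos (by
    have := one_lt_e; linarith)
  set K : ℝ := (1 - (1-β)/β * Real.log a ^ (-β)) * ff β (a+1) with hK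
  have hmem : ∀ x ∈ Icc a (a+1), Real.exp 1 < x := fun x hx => lt_of_lt_of_le ha hx.1
  have hanti : AntitoneOn (fun x => K * x + gg β x) (Icc a (a+1)) := by
    apply antitoneOn_of_hasDerivWithinAt_nonpos (convex_Icc _ _)
      (f' := fun x => K * 1 + -(ff β x) * (1 - (1-β)/β * Real.log x ^ (-β)))
    · intro x hx
      exact (((hasDerivAt_id x).const_mul K).add
        (gg_deriv β hβ0 (hmem x hx))).continuousAt.continuousWithinAt
    · intro x hx
      rw [interior_Icc] at hx
      exact (((hasDerivAt_id x).const_mul K).add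
        (gg_deriv β hβ0 (hmem x (Ioo_subset_Icc_self hx)))).hasDerivWithinAt
    · intro x hx
      rw [interior_Icc] at hx
      have hx' := hmem x (Ioo_subset_Icc_self hx)
      have hx1 : (1:ℝ) ≤ x := le_of_lt (lt_trans one_lt_e hx')
      have hLx : 0 < Real.log x := Real.log_pos (by have := one_lt_e; linarith)
      -- log x ^ (-β) ≤ log a ^ (-β)
      have hmonoL : Real.log x ^ (-β) ≤ Real.log a ^ (-β) := by
        rw [Real.rpow_neg hLa.le, Real.rpow_neg hLx.le]
        apply inv_anti₀ (Real.rpow_pos_of_pos hLa β)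
        exact Real.rpow_le_rpow hLa.le (Real.log_le_log ha0 hx.1.le) hβ0.le
      have hfac : 0 ≤ 1 - (1-β)/β * Real.log a ^ (-β) := by linarith
      have hfacx : 1 - (1-β)/β * Real.log a ^ (-β) ≤ 1 - (1-β)/β * Real.log x ^ (-β) := by
        have : (0:ℝ) ≤ (1-β)/β := div_nonneg (by linarith) hβ0.le
        nlinarith
      have key : K ≤ ff β x * (1 - (1-β)/β * Real.log x ^ (-β)) := by
        rw [hK, mul_comm (ff β x)]
        exact mul_le_mul hfacx (ff_anti β hβ0 hx1 (by linarith [hx.2] : x ≤ a+1))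
          (ff_nonneg β (by linarith)) (by linarith)
      nlinarith [key]
  have := hanti (left_mem_Icc.2 (by linarith)) (right_mem_Icc.2 (by linarith)) (by linarith : a ≤ a+1)
  simp only at this
  linarith


/-- **Lemma 6.2, barely super-linear log-stretched case.** For `β ∈ (0,1)` and
`s i = (i+1)·exp((log(i+1))^β)`, every tail sum `∑_{i=n}^∞ 1/s i` is finite and
`∑_{i=n}^∞ 1/s i = (β⁻¹+o(1))·(log n)^{1−β}·exp(−(log n)^β)` as `n → ∞`. -/
theorem stmt_8
    (β : ℝ) (hβ0 : 0 < β) (hβ1 : β < 1)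
    (s : ℕ → ℝ)
    (hs : ∀ i : ℕ, s i = ((i : ℝ) + 1) * Real.exp (Real.log ((i : ℝ) + 1) ^ β)) :
    (∀ n : ℕ, Summable fun i : ℕ => 1 / s (n + i)) ∧
      Tendsto (fun n : ℕ => (∑' i : ℕ, 1 / s (n + i)) *
          (β * Real.log n ^ (β - 1) * Real.exp (Real.log n ^ β)))
        atTop (nhds 1) := by
  have hc0 : 0 < (1-β)/β := div_pos (by linarith) hβ0
  have hsF : ∀ k : ℕ, 1 / s k = ff β ((k:ℝ)+1) := by
    intro k; rw [hs k]; simp [ff]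
  obtain ⟨N0, hN0⟩ := exists_nat_ge (max (Real.exp 1 + 1) (Real.exp ((2*((1-β)/β))^β⁻¹)))
  have hN0e : ∀ a : ℝ, (N0:ℝ) ≤ a → Real.exp 1 < a := by
    intro a haa
    have := le_trans (le_max_left (Real.exp 1 + 1) _) (le_trans hN0 haa); linarith
  have hN0c : ∀ a : ℝ, (N0:ℝ) ≤ a → (1-β)/β * Real.log a ^ (-β) ≤ 1/2 := by
    intro a haa
    have ha0 : 0 < a := lt_trans (Real.exp_pos 1) (hN0e a haa)
    have h2c0 : 0 < 2*((1-β)/β) := by linarith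
    have hle : Real.exp ((2*((1-β)/β))^β⁻¹) ≤ a :=
      le_trans (le_max_right (Real.exp 1 + 1) _) (le_trans hN0 haa)
    have hlog : (2*((1-β)/β))^β⁻¹ ≤ Real.log a := (Real.le_log_iff_exp_le ha0).2 hle
    have hLpos : 0 < Real.log a := lt_of_lt_of_le (Real.rpow_pos_of_pos h2c0 _) hlog
    have h2c : 2*((1-β)/β) ≤ Real.log a ^ β := by
      calc 2*((1-β)/β) = ((2*((1-β)/β))^β⁻¹)^β := by
            rw [← Real.rpow_mul h2c0.le, inv_mul_cancel₀ hβ0.ne', Real.rpow_one]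
        _ ≤ Real.log a ^ β :=
            Real.rpow_le_rpow (Real.rpow_nonneg h2c0.le _) hlog hβ0.le
    have hb : 0 < Real.log a ^ β := Real.rpow_pos_of_pos hLpos β
    rw [Real.rpow_neg hLpos.le]
    have hinv : (Real.log a ^ β)⁻¹ ≤ (2*((1-β)/β))⁻¹ := inv_anti₀ h2c0 h2c
    calc (1-β)/β * (Real.log a ^ β)⁻¹ ≤ (1-β)/β * (2*((1-β)/β))⁻¹ :=
          mul_le_mul_of_nonneg_left hinv hc0.le
      _ = 1/2 := by
          have h1b : (1:ℝ) - β ≠ 0 := by linarith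
          field_simp
  have hN01 : 1 ≤ N0 := by
    by_contra h
    push_neg at h
    interval_cases N0
    · simp only [Nat.cast_zero] at hN0
      have := le_trans (le_max_left (Real.exp 1 + 1) _) hN0
      have := Real.exp_pos 1; linarith
  -- termwise nonnegativity of tail terms
  have hterm_nonneg : ∀ k : ℕ, 0 ≤ 1 / s k := by
    intro k; rw [hsF k]; exact ff_nonneg β (by positivity)
  -- telescoping sum
  have htel : ∀ n : ℕ, N0 ≤ n →
      HasSum (fun i : ℕ => gg β ((n:ℝ)+i) - gg β ((n:ℝ)+i+1)) (gg β n) := by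
    intro n hn
    have hcast : (N0:ℝ) ≤ (n:ℝ) := Nat.cast_le.2 hn
    have hnonneg : ∀ i : ℕ, 0 ≤ gg β ((n:ℝ)+i) - gg β ((n:ℝ)+i+1) := by
      intro i
      have ha : (N0:ℝ) ≤ (n:ℝ)+i := le_trans hcast (le_add_of_nonneg_right (Nat.cast_nonneg i))
      have hB := lemB β hβ0 hβ1 (hN0e _ ha) (le_trans (hN0c _ ha) (by norm_num))
      have hx0 : (0:ℝ) ≤ (n:ℝ)+i+1 := by positivity
      have h0 : 0 ≤ (1 - (1-β)/β * Real.log ((n:ℝ)+i) ^ (-β)) * ff β ((n:ℝ)+i+1) :=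
        mul_nonneg (by linarith [hN0c _ ha]) (ff_nonneg β hx0)
      linarith
    rw [hasSum_iff_tendsto_nat_of_nonneg hnonneg]
    have hps : ∀ M : ℕ, ∑ i ∈ Finset.range M, (gg β ((n:ℝ)+i) - gg β ((n:ℝ)+i+1))
        = gg β (n:ℝ) - gg β ((n:ℝ)+M) := by
      intro M
      have harg : ∀ i : ℕ, gg β ((n:ℝ)+i+1) = gg β ((n:ℝ)+(↑(i+1):ℝ)) := by
        intro i; congr 1; push_cast; ring
      calc ∑ i ∈ Finset.range M, (gg β ((n:ℝ)+i) - gg β ((n:ℝ)+i+1))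
          = ∑ i ∈ Finset.range M, ((fun j : ℕ => gg β ((n:ℝ)+j)) i
              - (fun j : ℕ => gg β ((n:ℝ)+j)) (i+1)) := by
            apply Finset.sum_congr rfl
            intro i _
            simp only
            rw [harg i]
        _ = gg β ((n:ℝ)+(0:ℕ)) - gg β ((n:ℝ)+M) := Finset.sum_range_sub' _ M
        _ = gg β (n:ℝ) - gg β ((n:ℝ)+M) := by norm_num
    simp only [hps]
    have hglim : Tendsto (fun M : ℕ => gg β ((n:ℝ)+M)) atTop (nhds 0) := by
      apply (gg_tendsto β hβ0).comp
      exact tendsto_atTop_add_const_left atTop _ tendsto_natCast_atTop_atTop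
    simpa using tendsto_const_nhds.sub hglim
  -- summability
  have hshift_le : ∀ n : ℕ, N0 ≤ n → ∀ i : ℕ,
      1 / s (n + i) ≤ 2 * (gg β ((n:ℝ)+i) - gg β ((n:ℝ)+i+1)) := by
    intro n hn i
    have hcast : (N0:ℝ) ≤ (n:ℝ) := Nat.cast_le.2 hn
    have ha : (N0:ℝ) ≤ (n:ℝ)+i := le_trans hcast (le_add_of_nonneg_right (Nat.cast_nonneg i))
    have hB := lemB β hβ0 hβ1 (hN0e _ ha) (le_trans (hN0c _ ha) (by norm_num))
    have hhalf := hN0c _ ha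
    have hx0 : (0:ℝ) ≤ (n:ℝ)+i+1 := by positivity
    have hffnn := ff_nonneg β (x := (n:ℝ)+i+1) hx0
    have heq : 1 / s (n + i) = ff β ((n:ℝ)+i+1) := by
      rw [hsF (n+i)]; congr 1; push_cast; ring
    rw [heq]
    nlinarith
  have hsum_shift : Summable (fun i : ℕ => 1 / s (N0 + i)) := by
    apply Summable.of_nonneg_of_le (fun i => hterm_nonneg _) (hshift_le N0 le_rfl)
    exact ((htel N0 le_rfl).summable).mul_left 2
  have hsumF : Summable (fun k : ℕ => 1 / s k) := by
    apply (summable_nat_add_iff N0).1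
    exact hsum_shift.congr (fun i => by rw [Nat.add_comm])
  have h_summ : ∀ n : ℕ, Summable fun i : ℕ => 1 / s (n + i) := by
    intro n
    exact ((summable_nat_add_iff n).2 hsumF).congr (fun i => by rw [Nat.add_comm])
  refine ⟨h_summ, ?_⟩
  -- positivity and inverse formula for gg
  have hgpos : ∀ a : ℝ, Real.exp 1 < a → 0 < gg β a := by
    intro a ha
    have ha0 : 0 < a := lt_trans (Real.exp_pos 1) ha
    have hL : 0 < Real.log a := Real.log_pos (by have := one_lt_e; linarith)
    have h1 := Real.rpow_pos_of_pos hL (1-β)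
    have h2 := Real.exp_pos (-(Real.log a ^ β))
    simp only [gg]
    exact mul_pos (mul_pos (inv_pos.2 hβ0) h1) h2
  have hginv : ∀ a : ℝ, Real.exp 1 < a →
      (gg β a)⁻¹ = β * Real.log a ^ (β-1) * Real.exp (Real.log a ^ β) := by
    intro a ha
    have ha0 : 0 < a := lt_trans (Real.exp_pos 1) ha
    have hL : 0 < Real.log a := Real.log_pos (by have := one_lt_e; linarith)
    have hmul : Real.log a ^ (1-β) * Real.log a ^ (β-1) = 1 := by
      rw [← Real.rpow_add hL]; norm_num
    apply inv_eq_of_mul_eq_one_right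
    simp only [gg]
    rw [Real.exp_neg]
    have hexp := Real.exp_ne_zero (Real.log a ^ β)
    field_simp
    linear_combination hmul
  -- upper bound
  have hub : ∀ n : ℕ, N0 ≤ n → (∑' i : ℕ, 1 / s (n + i))
      ≤ (1 - (1-β)/β * Real.log (n:ℝ) ^ (-β))⁻¹ * gg β n := by
    intro n hn
    have hcast : (N0:ℝ) ≤ (n:ℝ) := Nat.cast_le.2 hn
    have hLn : 0 < Real.log (n:ℝ) := Real.log_pos (by have := one_lt_e; have := hN0e _ hcast; linarith)
    have hpos : 0 < 1 - (1-β)/β * Real.log (n:ℝ) ^ (-β) := by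
      have := hN0c _ hcast; linarith
    have hle : ∀ i : ℕ, 1 / s (n + i)
        ≤ (1 - (1-β)/β * Real.log (n:ℝ) ^ (-β))⁻¹ * (gg β ((n:ℝ)+i) - gg β ((n:ℝ)+i+1)) := by
      intro i
      have ha : (N0:ℝ) ≤ (n:ℝ)+i := le_trans hcast (le_add_of_nonneg_right (Nat.cast_nonneg i))
      have hB := lemB β hβ0 hβ1 (hN0e _ ha) (le_trans (hN0c _ ha) (by norm_num))
      have hLa : 0 < Real.log ((n:ℝ)+i) :=
        Real.log_pos (by have := one_lt_e; have := hN0e _ ha; linarith)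
      have hmonoL : Real.log ((n:ℝ)+i) ^ (-β) ≤ Real.log (n:ℝ) ^ (-β) := by
        rw [Real.rpow_neg hLn.le, Real.rpow_neg hLa.le]
        apply inv_anti₀ (Real.rpow_pos_of_pos hLn β)
        apply Real.rpow_le_rpow hLn.le _ hβ0.le
        have hn0 : (0:ℝ) < (n:ℝ) := lt_trans (Real.exp_pos 1) (hN0e _ hcast)
        apply Real.log_le_log hn0
        exact le_add_of_nonneg_right (Nat.cast_nonneg i)
      have hx0 : (0:ℝ) ≤ (n:ℝ)+i+1 := by positivity
      have hffnn := ff_nonneg β (x := (n:ℝ)+i+1) hx0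
      have heq : 1 / s (n + i) = ff β ((n:ℝ)+i+1) := by
        rw [hsF (n+i)]; congr 1; push_cast; ring
      rw [heq]
      have h2 : (1 - (1-β)/β * Real.log (n:ℝ) ^ (-β)) * ff β ((n:ℝ)+i+1)
          ≤ gg β ((n:ℝ)+i) - gg β ((n:ℝ)+i+1) := by
        refine le_trans ?_ hB
        apply mul_le_mul_of_nonneg_right _ hffnn
        have hcnn : (0:ℝ) ≤ (1-β)/β := hc0.le
        nlinarith
      calc ff β ((n:ℝ)+i+1)
          = (1 - (1-β)/β * Real.log (n:ℝ) ^ (-β))⁻¹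
            * ((1 - (1-β)/β * Real.log (n:ℝ) ^ (-β)) * ff β ((n:ℝ)+i+1)) := by
            rw [← mul_assoc, inv_mul_cancel₀ hpos.ne', one_mul]
        _ ≤ _ := mul_le_mul_of_nonneg_left h2 (inv_nonneg.2 hpos.le)
    calc (∑' i : ℕ, 1 / s (n + i))
        ≤ ∑' i : ℕ, (1 - (1-β)/β * Real.log (n:ℝ) ^ (-β))⁻¹
            * (gg β ((n:ℝ)+i) - gg β ((n:ℝ)+i+1)) :=
          Summable.tsum_le_tsum hle (h_summ n) (((htel n hn).mul_left _).summable)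
      _ = (1 - (1-β)/β * Real.log (n:ℝ) ^ (-β))⁻¹ * gg β n := ((htel n hn).mul_left _).tsum_eq
  -- lower bound
  have hlb : ∀ n : ℕ, N0 ≤ n → gg β n - ff β (n:ℝ) ≤ (∑' i : ℕ, 1 / s (n + i)) := by
    intro n hn
    have hn1 : 1 ≤ n := le_trans hN01 hn
    have hcast : (N0:ℝ) ≤ (n:ℝ) := Nat.cast_le.2 hn
    have hGsum : Summable (fun i : ℕ => ff β ((n:ℝ)+i)) := by
      apply (h_summ (n-1)).congr
      intro i
      rw [hsF ((n-1)+i)]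
      congr 1
      push_cast [Nat.cast_sub hn1]
      ring
    have h1 : gg β (n:ℝ) ≤ ∑' i : ℕ, ff β ((n:ℝ)+i) := by
      have hle : ∀ i : ℕ, gg β ((n:ℝ)+i) - gg β ((n:ℝ)+i+1) ≤ ff β ((n:ℝ)+i) := by
        intro i
        have ha : (N0:ℝ) ≤ (n:ℝ)+i := le_trans hcast (le_add_of_nonneg_right (Nat.cast_nonneg i))
        exact lemA β hβ0 hβ1 (hN0e _ ha)
      calc gg β (n:ℝ) = ∑' i : ℕ, (gg β ((n:ℝ)+i) - gg β ((n:ℝ)+i+1)) := ((htel n hn).tsum_eq).symm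
        _ ≤ ∑' i : ℕ, ff β ((n:ℝ)+i) := Summable.tsum_le_tsum hle (htel n hn).summable hGsum
    have h2 : (∑' i : ℕ, ff β ((n:ℝ)+i)) = ff β (n:ℝ) + ∑' i : ℕ, ff β ((n:ℝ)+(↑(i+1):ℝ)) := by
      have := Summable.tsum_eq_zero_add hGsum
      simpa using this
    have h3 : (∑' i : ℕ, ff β ((n:ℝ)+(↑(i+1):ℝ))) = ∑' i : ℕ, 1 / s (n + i) := by
      apply tsum_congr
      intro i
      rw [hsF (n+i)]
      congr 1
      push_cast
      ring
    rw [h2, h3] at h1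
    linarith
  -- limits of the bounding sequences
  have hlogn : Tendsto (fun n : ℕ => Real.log (n:ℝ)) atTop atTop :=
    Real.tendsto_log_atTop.comp tendsto_natCast_atTop_atTop
  have hupper_lim : Tendsto (fun n : ℕ => (1 - (1-β)/β * Real.log (n:ℝ) ^ (-β))⁻¹)
      atTop (nhds 1) := by
    have h1 : Tendsto (fun n : ℕ => (1-β)/β * Real.log (n:ℝ) ^ (-β)) atTop (nhds 0) := by
      have := ((tendsto_rpow_neg_atTop hβ0).comp hlogn).const_mul ((1-β)/β)
      simpa using this
    have h2 := (tendsto_const_nhds (x := (1:ℝ)) (f := atTop)).sub h1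
    rw [sub_zero] at h2
    have h3 := h2.inv₀ (by norm_num)
    simpa using h3
  have hff_gg : ∀ n : ℕ, N0 ≤ n → ff β (n:ℝ) * (gg β n)⁻¹
      = β * Real.log (n:ℝ) ^ (β-1) * ((n:ℝ))⁻¹ := by
    intro n hn
    have hcast : (N0:ℝ) ≤ (n:ℝ) := Nat.cast_le.2 hn
    have he := hN0e _ hcast
    have hn0 : (0:ℝ) < n := lt_trans (Real.exp_pos 1) he
    rw [hginv _ he]
    simp only [ff]
    have hexp := Real.exp_ne_zero (Real.log (n:ℝ) ^ β)
    field_simp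
  have hlower_lim : Tendsto (fun n : ℕ => 1 - ff β (n:ℝ) * (gg β n)⁻¹) atTop (nhds 1) := by
    have hz : Tendsto (fun n : ℕ => ff β (n:ℝ) * (gg β n)⁻¹) atTop (nhds 0) := by
      have hbnd : Tendsto (fun n : ℕ => β * ((n:ℝ))⁻¹) atTop (nhds 0) := by
        have := (tendsto_inv_atTop_zero.comp (tendsto_natCast_atTop_atTop (R := ℝ))).const_mul β
        simpa using this
      apply tendsto_of_tendsto_of_tendsto_of_le_of_le' tendsto_const_nhds hbnd
      · filter_upwards [Filter.eventually_ge_atTop N0] with n hn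
        have hcast : (N0:ℝ) ≤ (n:ℝ) := Nat.cast_le.2 hn
        have he := hN0e _ hcast
        have hn0 : (0:ℝ) < n := lt_trans (Real.exp_pos 1) he
        have := hgpos _ he
        have := ff_nonneg β (x := (n:ℝ)) hn0.le
        positivity
      · filter_upwards [Filter.eventually_ge_atTop N0] with n hn
        have hcast : (N0:ℝ) ≤ (n:ℝ) := Nat.cast_le.2 hn
        have he := hN0e _ hcast
        have hn0 : (0:ℝ) < n := lt_trans (Real.exp_pos 1) he
        have hL1 : 1 ≤ Real.log (n:ℝ) := by
          rw [Real.le_log_iff_exp_le hn0]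
          · exact he.le
        rw [hff_gg n hn]
        have hle1 : Real.log (n:ℝ) ^ (β-1) ≤ 1 :=
          Real.rpow_le_one_of_one_le_of_nonpos hL1 (by linarith)
        have hinn : (0:ℝ) ≤ ((n:ℝ))⁻¹ := by positivity
        calc β * Real.log (n:ℝ) ^ (β-1) * ((n:ℝ))⁻¹
            = β * (Real.log (n:ℝ) ^ (β-1) * ((n:ℝ))⁻¹) := by ring
          _ ≤ β * (1 * ((n:ℝ))⁻¹) :=
              mul_le_mul_of_nonneg_left (mul_le_mul_of_nonneg_right hle1 hinn) hβ0.le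
          _ = β * ((n:ℝ))⁻¹ := by ring
    have := (tendsto_const_nhds (x := (1:ℝ)) (f := atTop)).sub hz
    simpa using this
  -- final squeeze
  apply tendsto_of_tendsto_of_tendsto_of_le_of_le' hlower_lim hupper_lim
  · filter_upwards [Filter.eventually_ge_atTop N0] with n hn
    have hcast : (N0:ℝ) ≤ (n:ℝ) := Nat.cast_le.2 hn
    have he := hN0e _ hcast
    have hg := hgpos _ he
    have hT := hlb n hn
    have hrw : β * Real.log (n:ℝ) ^ (β-1) * Real.exp (Real.log (n:ℝ) ^ β) = (gg β n)⁻¹ :=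
      (hginv _ he).symm
    rw [hrw]
    have := mul_le_mul_of_nonneg_right hT (inv_nonneg.2 hg.le)
    calc 1 - ff β (n:ℝ) * (gg β n)⁻¹
        = (gg β (n:ℝ) - ff β (n:ℝ)) * (gg β n)⁻¹ := by
          rw [sub_mul, mul_inv_cancel₀ hg.ne']
      _ ≤ _ := this
  · filter_upwards [Filter.eventually_ge_atTop N0] with n hn
    have hcast : (N0:ℝ) ≤ (n:ℝ) := Nat.cast_le.2 hn
    have he := hN0e _ hcast
    have hg := hgpos _ he
    have hT := hub n hn
    have hrw : β * Real.log (n:ℝ) ^ (β-1) * Real.exp (Real.log (n:ℝ) ^ β) = (gg β n)⁻¹ :=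
      (hginv _ he).symm
    rw [hrw]
    calc (∑' i : ℕ, 1 / s (n + i)) * (gg β n)⁻¹
        ≤ ((1 - (1-β)/β * Real.log (n:ℝ) ^ (-β))⁻¹ * gg β n) * (gg β n)⁻¹ :=
          mul_le_mul_of_nonneg_right hT (inv_nonneg.2 hg.le)
      _ = (1 - (1-β)/β * Real.log (n:ℝ) ^ (-β))⁻¹ := by
          rw [mul_assoc, mul_inv_cancel₀ hg.ne', mul_one]
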